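/- Let R ⊆ ℝ² be an axis-aligned rectangle all of whose sides have length at least 4, with center p. For every closed half-plane H₁ whose boundary line passes through p, there exists a point p' ∈ R with dist(p, p') ≤ 2 such that for every closed half-plane H₂ whose boundary line passes through p', there exist an axis-aligned rectangle Rec ⊆ R and a polygonal path P starting at p and ending at the center of Rec with the following properties: (1) every point of (R ∩ H₁ ∩ H₂) \ Rec is at distance at most 1 from some point of P; (2) Perimeter(R) − Perimeter(Rec) ≥ 2; (3) the length of P is at most 21·(Perimeter(R) − Perimeter(Rec)). -/

import Mathlib

set_option maxHeartbeats 1000000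

open Real

noncomputable section

/-- Points of the Euclidean plane. -/
abbrev Pt := EuclideanSpace ℝ (Fin 2)

/-- An axis-aligned rectangle (all sides of positive length, parallel to the axes),
given by the coordinates of its sides. -/
structure AARect where
  xmin : ℝ
  xmax : ℝ
  ymin : ℝ
  ymax : ℝ
  hx : xmin < xmax
  hy : ymin < ymax

/-- The set of points of an axis-aligned rectangle. -/
def AARect.set (R : AARect) : Set Pt :=
  {q | q 0 ∈ Set.Icc R.xmin R.xmax ∧ q 1 ∈ Set.Icc R.ymin R.ymax}

/-- The center of an axis-aligned rectangle. -/
def AARect.center (R : AARect) : Pt :=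
  !₂[(R.xmin + R.xmax) / 2, (R.ymin + R.ymax) / 2]

/-- The perimeter of an axis-aligned rectangle. -/
def AARect.perim (R : AARect) : ℝ :=
  2 * ((R.xmax - R.xmin) + (R.ymax - R.ymin))

/-- The length of the polygonal path with consecutive vertices `v 0, v 1, …, v N`:
the sum of the lengths of its segments. -/
def polyLength {N : ℕ} (v : Fin (N + 1) → Pt) : ℝ :=
  ∑ i : Fin N, dist (v i.castSucc) (v i.succ)

/-- The set of points of the polygonal path with consecutive vertices `v 0, …, v N`. -/
def polySet {N : ℕ} (v : Fin (N + 1) → Pt) : Set Pt :=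
  ⋃ i : Fin N, segment ℝ (v i.castSucc) (v i.succ)

/-- `H` is a closed half-plane whose boundary line passes through `p`. -/
def IsHalfPlaneThrough (H : Set Pt) (p : Pt) : Prop :=
  ∃ u : Pt, u ≠ 0 ∧ H = {q | (0 : ℝ) ≤ inner ℝ u (q - p)}

private lemma pt_dist (x y : Pt) : dist x y = Real.sqrt ((x 0 - y 0)^2 + (x 1 - y 1)^2) := by
  rw [EuclideanSpace.dist_eq, Fin.sum_univ_two]
  simp [Real.dist_eq, sq_abs]

private lemma pt_inner (x y : Pt) : (inner ℝ x y : ℝ) = x 0 * y 0 + x 1 * y 1 := by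
  rw [PiLp.inner_apply, Fin.sum_univ_two]; simp [RCLike.inner_apply]; ring

private lemma pt_unit {x : Pt} (h : ‖x‖ = 1) : (x 0)^2 + (x 1)^2 = 1 := by
  have := EuclideanSpace.norm_eq x
  rw [h, Fin.sum_univ_two] at this
  simp only [Real.norm_eq_abs, sq_abs] at this
  nlinarith [Real.sq_sqrt (by positivity : (0:ℝ) ≤ (x 0)^2 + (x 1)^2)]

private lemma pt_add (x y : Pt) (i : Fin 2) : (x + y) i = x i + y i := rfl
private lemma pt_sub (x y : Pt) (i : Fin 2) : (x - y) i = x i - y i := rfl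
private lemma pt_smul (c : ℝ) (x : Pt) (i : Fin 2) : (c • x) i = c * x i := rfl
private lemma pt_mk0 (a b : ℝ) : (!₂[a, b] : Pt) 0 = a := rfl
private lemma pt_mk1 (a b : ℝ) : (!₂[a, b] : Pt) 1 = b := rfl

private def mydist (z w : ℝ × ℝ) : ℝ := Real.sqrt ((z.1 - w.1)^2 + (z.2 - w.2)^2)

private lemma mydist_le {z w : ℝ × ℝ} {c : ℝ} (hc : 0 ≤ c)
    (h : (z.1 - w.1)^2 + (z.2 - w.2)^2 ≤ c^2) : mydist z w ≤ c := by
  rw [mydist]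
  calc Real.sqrt ((z.1 - w.1)^2 + (z.2 - w.2)^2) ≤ Real.sqrt (c^2) := Real.sqrt_le_sqrt h
  _ = c := by rw [Real.sqrt_sq hc]

private lemma run_cover (a₀ a₁ σ α e X Y : ℝ) (hu : a₀^2 + a₁^2 = 1) (hσ : 0 < σ)
    (he : e = 1 ∨ e = -1)
    (hs1 : -σ ≤ -a₁*X + a₀*Y) (hs2 : -a₁*X + a₀*Y ≤ σ)
    (ht1 : α - 1 ≤ a₀*X + a₁*Y) (ht2 : a₀*X + a₁*Y ≤ α + 1) :
    ∃ μ : ℝ, 0 ≤ μ ∧ μ ≤ 1 ∧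
      ((1 - μ) * (α*a₀ + e*σ*a₁) + μ * (α*a₀ - e*σ*a₁) - X)^2 +
      ((1 - μ) * (α*a₁ - e*σ*a₀) + μ * (α*a₁ + e*σ*a₀) - Y)^2 ≤ 1 := by
  set s : ℝ := -a₁*X + a₀*Y with hsdef
  set t : ℝ := a₀*X + a₁*Y with htdef
  have hX : X = a₀*t - a₁*s := by rw [htdef, hsdef]; linear_combination -X*hu
  have hY : Y = a₁*t + a₀*s := by rw [htdef, hsdef]; linear_combination -Y*hu
  have hσne : σ ≠ 0 := ne_of_gt hσ
  refine ⟨(e*s + σ)/(2*σ), ?_, ?_, ?_⟩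
  · apply div_nonneg ?_ (by linarith)
    rcases he with h | h <;> subst h <;> linarith
  · rw [div_le_one (by linarith)]
    rcases he with h | h <;> subst h <;> linarith
  · have hes : (2*((e*s + σ)/(2*σ)) - 1)*σ = e*s := by field_simp; ring
    have he2 : e^2 = 1 := by rcases he with h | h <;> subst h <;> norm_num
    have e1 : ((1 - (e*s + σ)/(2*σ)) * (α*a₀ + e*σ*a₁) + ((e*s + σ)/(2*σ)) * (α*a₀ - e*σ*a₁) - X)
        = a₀*(α - t) := by
      have expand : ((1 - (e*s + σ)/(2*σ)) * (α*a₀ + e*σ*a₁) + ((e*s + σ)/(2*σ)) * (α*a₀ - e*σ*a₁))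
          = α*a₀ - (2*((e*s + σ)/(2*σ)) - 1)*σ*e*a₁ := by ring
      rw [expand, mul_comm ((2*((e*s + σ)/(2*σ)) - 1)*σ) e, hes]
      rw [hX]; linear_combination (-s*a₁)*he2
    have e2 : ((1 - (e*s + σ)/(2*σ)) * (α*a₁ - e*σ*a₀) + ((e*s + σ)/(2*σ)) * (α*a₁ + e*σ*a₀) - Y)
        = a₁*(α - t) := by
      have expand : ((1 - (e*s + σ)/(2*σ)) * (α*a₁ - e*σ*a₀) + ((e*s + σ)/(2*σ)) * (α*a₁ + e*σ*a₀))
          = α*a₁ + (2*((e*s + σ)/(2*σ)) - 1)*σ*e*a₀ := by ring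
      rw [expand, mul_comm ((2*((e*s + σ)/(2*σ)) - 1)*σ) e, hes]
      rw [hY]; linear_combination (s*a₀)*he2
    rw [e1, e2]
    have : (a₀*(α - t))^2 + (a₁*(α - t))^2 = (α - t)^2 := by linear_combination (α - t)^2*hu
    rw [this]
    nlinarith

private lemma core (A B a₀ a₁ w₀ w₁ : ℝ) (hA : 2 ≤ A) (hB : 2 ≤ B)
    (ha₀ : 0 ≤ a₀) (ha₁ : 0 ≤ a₁) (hu : a₀^2 + a₁^2 = 1) (hw : w₀^2 + w₁^2 = 1) :
    ∃ (l r b t : ℝ) (M : ℕ) (V : Fin (M+1) → ℝ × ℝ),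
      0 ≤ l ∧ 0 ≤ r ∧ 0 ≤ b ∧ 0 ≤ t ∧ l + r < 2*A ∧ b + t < 2*B ∧ 1 ≤ l+r+b+t ∧
      V 0 = (0,0) ∧ V (Fin.last M) = ((l-r)/2, (b-t)/2) ∧
      (∑ i : Fin M, mydist (V i.castSucc) (V i.succ)) ≤ 21*(2*(l+r+b+t)) ∧
      (∀ X Y : ℝ, -A ≤ X → X ≤ A → -B ≤ Y → Y ≤ B →
        0 ≤ a₀*X + a₁*Y → 0 ≤ w₀*(X - 2*a₀) + w₁*(Y - 2*a₁) →
        ¬(-A + l ≤ X ∧ X ≤ A - r ∧ -B + b ≤ Y ∧ Y ≤ B - t) →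
        ∃ (i : Fin M) (μ : ℝ), 0 ≤ μ ∧ μ ≤ 1 ∧
          (((1-μ) * (V i.castSucc).1 + μ * (V i.succ).1) - X)^2 +
          (((1-μ) * (V i.castSucc).2 + μ * (V i.succ).2) - Y)^2 ≤ 1) := by
  have ha₀1 : a₀ ≤ 1 := by nlinarith
  have ha₁1 : a₁ ≤ 1 := by nlinarith
  rcases le_or_gt 1 (a₀*A - a₁*B) with hT1 | hT1
  · -- trim left by 1, empty leak
    have ha₀p : 0 < a₀ := by nlinarith
    refine ⟨1, 0, 0, 0, 1, ![(0,0), (1/2, 0)], by norm_num, le_refl 0, le_refl 0, le_refl 0,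
      by linarith, by linarith, by norm_num, rfl, ?_, ?_, ?_⟩
    · show ((1:ℝ)/2, (0:ℝ)) = _
      norm_num
    · rw [Fin.sum_univ_one]
      refine le_trans (mydist_le (c := 1) (by norm_num) ?_) (by norm_num)
      show ((0:ℝ) - 1/2)^2 + ((0:ℝ) - 0)^2 ≤ 1^2
      norm_num
    · intro X Y hX1 hX2 hY1 hY2 h1 h2 hout
      exfalso
      apply hout
      refine ⟨?_, by linarith, by linarith, by linarith⟩
      have key : 1 ≤ a₀*(X + A) := by
        nlinarith [mul_nonneg ha₁ (by linarith : (0:ℝ) ≤ B - Y)]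
      nlinarith [mul_nonneg (by linarith : (0:ℝ) ≤ 1 - a₀) (by linarith : (0:ℝ) ≤ X + A)]
  rcases le_or_gt 1 (a₁*B - a₀*A) with hT2 | hT2
  · -- trim bottom by 1, empty leak
    have ha₁p : 0 < a₁ := by nlinarith
    refine ⟨0, 0, 1, 0, 1, ![(0,0), (0, 1/2)], le_refl 0, le_refl 0, by norm_num, le_refl 0,
      by linarith, by linarith, by norm_num, rfl, ?_, ?_, ?_⟩
    · show ((0:ℝ), (1:ℝ)/2) = _
      norm_num
    · rw [Fin.sum_univ_one]
      refine le_trans (mydist_le (c := 1) (by norm_num) ?_) (by norm_num)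
      show ((0:ℝ) - 0)^2 + ((0:ℝ) - 1/2)^2 ≤ 1^2
      norm_num
    · intro X Y hX1 hX2 hY1 hY2 h1 h2 hout
      exfalso
      apply hout
      refine ⟨by linarith, by linarith, ?_, by linarith⟩
      have key : 1 ≤ a₁*(Y + B) := by
        nlinarith [mul_nonneg ha₀ (by linarith : (0:ℝ) ≤ A - X)]
      nlinarith [mul_nonneg (by linarith : (0:ℝ) ≤ 1 - a₁) (by linarith : (0:ℝ) ≤ Y + B)]
  · -- diagonal regime
    have ha₀p : 0 < a₀ := by
      rcases lt_or_ge 0 a₀ with h | h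
      · exact h
      · exfalso
        have h0 : a₀ = 0 := le_antisymm h ha₀
        have h1 : a₁ = 1 := by nlinarith
        rw [h0, h1] at hT2
        linarith
    have ha₁p : 0 < a₁ := by
      rcases lt_or_ge 0 a₁ with h | h
      · exact h
      · exfalso
        have h0 : a₁ = 0 := le_antisymm h ha₁
        have h1 : a₀ = 1 := by nlinarith
        rw [h0, h1] at hT1
        linarith
    obtain ⟨σ, hσdef⟩ : ∃ s : ℝ, s = a₁*A + a₀*B := ⟨_, rfl⟩
    have hσ2 : 2 ≤ σ := by
      rw [hσdef]
      linarith [mul_le_mul_of_nonneg_left hA ha₁, mul_le_mul_of_nonneg_left hB ha₀,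
        mul_nonneg ha₀ (by linarith : (0:ℝ) ≤ 1 - a₀),
        mul_nonneg ha₁ (by linarith : (0:ℝ) ≤ 1 - a₁)]
    have hσAB : σ ≤ A + B := by
      rw [hσdef]
      linarith [mul_le_mul_of_nonneg_right ha₁1 (by linarith : (0:ℝ) ≤ A),
        mul_le_mul_of_nonneg_right ha₀1 (by linarith : (0:ℝ) ≤ B)]
    have hσpos : 0 < σ := by linarith
    obtain ⟨c, hcdef⟩ : ∃ s : ℝ, s = a₀*w₀ + a₁*w₁ := ⟨_, rfl⟩
    obtain ⟨d, hddef⟩ : ∃ s : ℝ, s = a₀*w₁ - a₁*w₀ := ⟨_, rfl⟩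
    have hcd : c^2 + d^2 = 1 := by
      rw [hcdef, hddef]
      have : (a₀*w₀ + a₁*w₁)^2 + (a₀*w₁ - a₁*w₀)^2 = (a₀^2 + a₁^2)*(w₀^2 + w₁^2) := by ring
      rw [this, hu, hw]; norm_num
    have hid : ∀ X Y : ℝ, w₀*(X - 2*a₀) + w₁*(Y - 2*a₁)
        = c*((a₀*X + a₁*Y) - 2) + d*(-a₁*X + a₀*Y) := by
      intro X Y
      rw [hcdef, hddef]
      linear_combination (-(w₀*X + w₁*Y))*hu
    by_cases hBot : ∃ X Y : ℝ, (-A ≤ X ∧ X ≤ A ∧ -B ≤ Y ∧ Y ≤ B ∧ 0 ≤ a₀*X + a₁*Y ∧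
        0 ≤ w₀*(X - 2*a₀) + w₁*(Y - 2*a₁)) ∧ Y ≤ -B + 1
    · by_cases hLeft : ∃ X Y : ℝ, (-A ≤ X ∧ X ≤ A ∧ -B ≤ Y ∧ Y ≤ B ∧ 0 ≤ a₀*X + a₁*Y ∧
          0 ≤ w₀*(X - 2*a₀) + w₁*(Y - 2*a₁)) ∧ X ≤ -A + 1
      · -- 3c : snake covering {0 ≤ t' ≤ 8}, tiny Rec in the middle
        obtain ⟨Xb, Yb, ⟨hbx1, hbx2, hby1, hby2, hb1, hb2⟩, hbY⟩ := hBot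
        obtain ⟨Xl, Yl, ⟨hlx1, hlx2, hly1, hly2, hl1, hl2⟩, hlX⟩ := hLeft
        rw [hid Xb Yb] at hb2
        rw [hid Xl Yl] at hl2
        have huB : a₀^2*B + a₁^2*B = B := by linear_combination B*hu
        have huA : a₀^2*A + a₁^2*A = A := by linear_combination A*hu
        -- bottom witness facts
        have htb2 : a₀*Xb + a₁*Yb < 2 := by
          linarith [mul_le_mul_of_nonneg_left hbx2 ha₀, mul_le_mul_of_nonneg_left hbY ha₁]
        have hsbB : a₀*(-a₁*Xb + a₀*Yb) ≤ 1 - B := by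
          have hident : a₀*(-a₁*Xb + a₀*Yb) - Yb = -(a₁*(a₀*Xb + a₁*Yb)) := by
            linear_combination Yb*hu
          linarith [hident, mul_nonneg ha₁ hb1, hbY]
        have hsbneg : -a₁*Xb + a₀*Yb ≤ -1 := by
          by_contra h'
          push_neg at h'
          linarith [mul_lt_mul_of_pos_left h' ha₀p, hsbB, ha₀1, hB]
        -- left witness facts
        have htl2 : a₀*Xl + a₁*Yl < 2 := by
          linarith [mul_le_mul_of_nonneg_left hlX ha₀, mul_le_mul_of_nonneg_left hly2 ha₁]
        have hslA : A - 1 ≤ a₁*(-a₁*Xl + a₀*Yl) := by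
          have hident : a₁*(-a₁*Xl + a₀*Yl) + Xl = a₀*(a₀*Xl + a₁*Yl) := by
            linear_combination (-Xl)*hu
          linarith [hident, mul_nonneg ha₀ hl1, hlX]
        have hslpos : 1 ≤ -a₁*Xl + a₀*Yl := by
          by_contra h'
          push_neg at h'
          linarith [mul_lt_mul_of_pos_left h' ha₁p, hslA, ha₁1, hA]
        refine ⟨A - 1/2, A - 1/2, B - 1/2, B - 1/2, 9,
          ![(0,0), (1*a₀ + 1*σ*a₁, 1*a₁ - 1*σ*a₀), (1*a₀ - 1*σ*a₁, 1*a₁ + 1*σ*a₀),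
            (3*a₀ + (-1)*σ*a₁, 3*a₁ - (-1)*σ*a₀), (3*a₀ - (-1)*σ*a₁, 3*a₁ + (-1)*σ*a₀),
            (5*a₀ + 1*σ*a₁, 5*a₁ - 1*σ*a₀), (5*a₀ - 1*σ*a₁, 5*a₁ + 1*σ*a₀),
            (7*a₀ + (-1)*σ*a₁, 7*a₁ - (-1)*σ*a₀), (7*a₀ - (-1)*σ*a₁, 7*a₁ + (-1)*σ*a₀), (0,0)],
          by linarith, by linarith, by linarith, by linarith,
          by linarith, by linarith, by linarith, rfl, ?_, ?_, ?_⟩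
        · show ((0:ℝ), (0:ℝ)) = _
          rw [Prod.mk.injEq]
          constructor <;> ring
        · have hsum : (∑ i : Fin 9, mydist
              ((![(0,0), (1*a₀ + 1*σ*a₁, 1*a₁ - 1*σ*a₀), (1*a₀ - 1*σ*a₁, 1*a₁ + 1*σ*a₀),
                (3*a₀ + (-1)*σ*a₁, 3*a₁ - (-1)*σ*a₀), (3*a₀ - (-1)*σ*a₁, 3*a₁ + (-1)*σ*a₀),
                (5*a₀ + 1*σ*a₁, 5*a₁ - 1*σ*a₀), (5*a₀ - 1*σ*a₁, 5*a₁ + 1*σ*a₀),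
                (7*a₀ + (-1)*σ*a₁, 7*a₁ - (-1)*σ*a₀), (7*a₀ - (-1)*σ*a₁, 7*a₁ + (-1)*σ*a₀),
                (0,0)] : Fin 10 → ℝ × ℝ) i.castSucc)
              ((![(0,0), (1*a₀ + 1*σ*a₁, 1*a₁ - 1*σ*a₀), (1*a₀ - 1*σ*a₁, 1*a₁ + 1*σ*a₀),
                (3*a₀ + (-1)*σ*a₁, 3*a₁ - (-1)*σ*a₀), (3*a₀ - (-1)*σ*a₁, 3*a₁ + (-1)*σ*a₀),
                (5*a₀ + 1*σ*a₁, 5*a₁ - 1*σ*a₀), (5*a₀ - 1*σ*a₁, 5*a₁ + 1*σ*a₀),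
                (7*a₀ + (-1)*σ*a₁, 7*a₁ - (-1)*σ*a₀), (7*a₀ - (-1)*σ*a₁, 7*a₁ + (-1)*σ*a₀),
                (0,0)] : Fin 10 → ℝ × ℝ) i.succ)) =
              mydist ((0:ℝ),(0:ℝ)) (1*a₀ + 1*σ*a₁, 1*a₁ - 1*σ*a₀)
            + mydist (1*a₀ + 1*σ*a₁, 1*a₁ - 1*σ*a₀) (1*a₀ - 1*σ*a₁, 1*a₁ + 1*σ*a₀)
            + mydist (1*a₀ - 1*σ*a₁, 1*a₁ + 1*σ*a₀) (3*a₀ + (-1)*σ*a₁, 3*a₁ - (-1)*σ*a₀)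
            + mydist (3*a₀ + (-1)*σ*a₁, 3*a₁ - (-1)*σ*a₀) (3*a₀ - (-1)*σ*a₁, 3*a₁ + (-1)*σ*a₀)
            + mydist (3*a₀ - (-1)*σ*a₁, 3*a₁ + (-1)*σ*a₀) (5*a₀ + 1*σ*a₁, 5*a₁ - 1*σ*a₀)
            + mydist (5*a₀ + 1*σ*a₁, 5*a₁ - 1*σ*a₀) (5*a₀ - 1*σ*a₁, 5*a₁ + 1*σ*a₀)
            + mydist (5*a₀ - 1*σ*a₁, 5*a₁ + 1*σ*a₀) (7*a₀ + (-1)*σ*a₁, 7*a₁ - (-1)*σ*a₀)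
            + mydist (7*a₀ + (-1)*σ*a₁, 7*a₁ - (-1)*σ*a₀) (7*a₀ - (-1)*σ*a₁, 7*a₁ + (-1)*σ*a₀)
            + mydist (7*a₀ - (-1)*σ*a₁, 7*a₁ + (-1)*σ*a₀) ((0:ℝ),(0:ℝ)) := by
            rw [Fin.sum_univ_castSucc (n := 8), Fin.sum_univ_eight]
            rfl
          rw [hsum]
          have E0 : mydist ((0:ℝ),(0:ℝ)) (1*a₀ + 1*σ*a₁, 1*a₁ - 1*σ*a₀) ≤ 1 + σ := by
            refine mydist_le (by linarith) ?_
            have : (((0:ℝ),(0:ℝ)).1 - (1*a₀ + 1*σ*a₁, 1*a₁ - 1*σ*a₀).1)^2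
                + (((0:ℝ),(0:ℝ)).2 - (1*a₀ + 1*σ*a₁, 1*a₁ - 1*σ*a₀).2)^2 = 1 + σ^2 := by
              show ((0:ℝ) - (1*a₀ + 1*σ*a₁))^2 + ((0:ℝ) - (1*a₁ - 1*σ*a₀))^2 = 1 + σ^2
              linear_combination (1 + σ^2)*hu
            rw [this]
            nlinarith
          have E8 : mydist (7*a₀ - (-1)*σ*a₁, 7*a₁ + (-1)*σ*a₀) ((0:ℝ),(0:ℝ)) ≤ 7 + σ := by
            refine mydist_le (by linarith) ?_
            have : ((7*a₀ - (-1)*σ*a₁, 7*a₁ + (-1)*σ*a₀).1 - ((0:ℝ),(0:ℝ)).1)^2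
                + ((7*a₀ - (-1)*σ*a₁, 7*a₁ + (-1)*σ*a₀).2 - ((0:ℝ),(0:ℝ)).2)^2 = 49 + σ^2 := by
              show ((7*a₀ - (-1)*σ*a₁) - 0)^2 + ((7*a₁ + (-1)*σ*a₀) - 0)^2 = 49 + σ^2
              linear_combination (49 + σ^2)*hu
            rw [this]
            linarith [hσpos]
          have Erun : ∀ α e : ℝ, e = 1 ∨ e = -1 →
              mydist (α*a₀ + e*σ*a₁, α*a₁ - e*σ*a₀) (α*a₀ - e*σ*a₁, α*a₁ + e*σ*a₀) ≤ 2*σ := by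
            intro α e he
            refine mydist_le (by linarith) ?_
            show ((α*a₀ + e*σ*a₁) - (α*a₀ - e*σ*a₁))^2 + ((α*a₁ - e*σ*a₀) - (α*a₁ + e*σ*a₀))^2
              ≤ (2*σ)^2
            have he2 : e^2 = 1 := by rcases he with h | h <;> subst h <;> norm_num
            have : ((α*a₀ + e*σ*a₁) - (α*a₀ - e*σ*a₁))^2 + ((α*a₁ - e*σ*a₀) - (α*a₁ + e*σ*a₀))^2
                = 4*σ^2 := by linear_combination (4*σ^2*(a₀^2+a₁^2))*he2 + (4*σ^2)*hu
            rw [this]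
            linarith
          have Estep : ∀ α β e f : ℝ, e = 1 ∨ e = -1 → f = 1 ∨ f = -1 → β = α + 2 → e*σ = -(f*σ) →
              mydist (α*a₀ - e*σ*a₁, α*a₁ + e*σ*a₀) (β*a₀ + f*σ*a₁, β*a₁ - f*σ*a₀) ≤ 2 := by
            intro α β e f he hf hβ hef
            refine mydist_le (by norm_num) ?_
            show ((α*a₀ - e*σ*a₁) - (β*a₀ + f*σ*a₁))^2 + ((α*a₁ + e*σ*a₀) - (β*a₁ - f*σ*a₀))^2
              ≤ 2^2
            have h1 : (α*a₀ - e*σ*a₁) - (β*a₀ + f*σ*a₁) = -2*a₀ := by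
              rw [hβ]; linear_combination (-a₁)*hef
            have h2 : (α*a₁ + e*σ*a₀) - (β*a₁ - f*σ*a₀) = -2*a₁ := by
              rw [hβ]; linear_combination a₀*hef
            rw [h1, h2]
            linarith [hu]
          have E2 := Estep 1 3 1 (-1) (Or.inl rfl) (Or.inr rfl) (by norm_num) (by ring)
          have E4 := Estep 3 5 (-1) 1 (Or.inr rfl) (Or.inl rfl) (by norm_num) (by ring)
          have E6 := Estep 5 7 1 (-1) (Or.inl rfl) (Or.inr rfl) (by norm_num) (by ring)
          have E1 := Erun 1 1 (Or.inl rfl)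
          have E3 := Erun 3 (-1) (Or.inr rfl)
          have E5 := Erun 5 1 (Or.inl rfl)
          have E7 := Erun 7 (-1) (Or.inr rfl)
          linarith [E0, E1, E2, E3, E4, E5, E6, E7, E8]
        · intro X Y hX1 hX2 hY1 hY2 h1 h2 hout
          rw [hid X Y] at h2
          have hsσ1 : -σ ≤ -a₁*X + a₀*Y := by
            rw [hσdef]
            linarith [mul_le_mul_of_nonneg_left hX2 ha₁, mul_le_mul_of_nonneg_left hY1 ha₀]
          have hsσ2 : -a₁*X + a₀*Y ≤ σ := by
            rw [hσdef]
            linarith [mul_le_mul_of_nonneg_left hX1 ha₁, mul_le_mul_of_nonneg_left hY2 ha₀]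
          have ht8 : a₀*X + a₁*Y ≤ 8 := by
            rcases le_or_gt 0 d with hd | hd
            · have hc : c < 0 := by
                rcases lt_trichotomy c 0 with h | h | h
                · exact h
                · exfalso
                  rw [h] at hcd
                  have hd2 : d^2 = 1 := by linarith [hcd]
                  have hfac : (d-1)*(d+1) = 0 := by linear_combination hd2
                  rcases mul_eq_zero.mp hfac with h1 | h1
                  · have hd1 : d = 1 := by linarith
                    rw [h, hd1] at hb2
                    linarith [hb2, hsbneg]
                  · linarith [hd]
                · exfalso
                  linarith [hb2, mul_pos h (by linarith : (0:ℝ) < 2 - (a₀*Xb + a₁*Yb)),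
                    mul_nonneg hd (by linarith : (0:ℝ) ≤ -(-a₁*Xb + a₀*Yb))]
              have h1' : d*(-(-a₁*Xb + a₀*Yb)) ≤ (-c)*(2 - (a₀*Xb + a₁*Yb)) := by linarith [hb2]
              have hdb : d*(B-1) ≤ 2*(-c)*a₀ := by
                linarith [mul_le_mul_of_nonneg_left h1' ha₀,
                  mul_le_mul_of_nonneg_left (by linarith : B - 1 ≤ -(a₀*(-a₁*Xb + a₀*Yb))) hd,
                  mul_nonneg (mul_nonneg (by linarith : (0:ℝ) ≤ -c) ha₀) hb1]
              have s1 : (-c)*((a₀*X + a₁*Y) - 2) ≤ d*σ := by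
                linarith [h2, mul_le_mul_of_nonneg_left hsσ2 hd]
              have s3 : a₀*σ ≤ B + 1 := by
                rw [hσdef]
                linarith [mul_nonneg ha₁ (by linarith : (0:ℝ) ≤ a₁*B + 1 - a₀*A), huB]
              have s2 : d*(B-1)*σ ≤ 2*(-c)*a₀*σ := by
                linarith [mul_le_mul_of_nonneg_right hdb (le_of_lt hσpos)]
              have s4 : (-c)*(((a₀*X + a₁*Y) - 2)*(B-1)) ≤ 2*(-c)*(B+1) := by
                linarith [mul_le_mul_of_nonneg_right s1 (by linarith : (0:ℝ) ≤ B - 1), s2,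
                  mul_le_mul_of_nonneg_left s3 (by linarith : (0:ℝ) ≤ 2*(-c))]
              by_contra h8
              push_neg at h8
              have hgt : 2*(B+1) < ((a₀*X + a₁*Y) - 2)*(B-1) := by
                have := mul_lt_mul_of_pos_right
                  (show (6:ℝ) < (a₀*X + a₁*Y) - 2 by linarith)
                  (show (0:ℝ) < B - 1 by linarith)
                linarith
              linarith [s4, mul_pos (by linarith : (0:ℝ) < -c)
                (by linarith : (0:ℝ) < ((a₀*X + a₁*Y) - 2)*(B-1) - 2*(B+1))]
            · have hc : c < 0 := by
                rcases lt_trichotomy c 0 with h | h | h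
                · exact h
                · exfalso
                  rw [h] at hcd
                  have hd2 : d^2 = 1 := by linarith [hcd]
                  have hfac : (d-1)*(d+1) = 0 := by linear_combination hd2
                  rcases mul_eq_zero.mp hfac with h1 | h1
                  · linarith [hd]
                  · have hd1 : d = -1 := by linarith
                    rw [h, hd1] at hl2
                    linarith [hl2, hslpos]
                · exfalso
                  linarith [hl2, mul_pos h (by linarith : (0:ℝ) < 2 - (a₀*Xl + a₁*Yl)),
                    mul_pos (by linarith : (0:ℝ) < -d) (by linarith : (0:ℝ) < -a₁*Xl + a₀*Yl)]
              have h1' : (-d)*(-a₁*Xl + a₀*Yl) ≤ (-c)*(2 - (a₀*Xl + a₁*Yl)) := by linarith [hl2]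
              have hdl : (-d)*(A-1) ≤ 2*(-c)*a₁ := by
                linarith [mul_le_mul_of_nonneg_left h1' ha₁,
                  mul_le_mul_of_nonneg_left hslA (by linarith : (0:ℝ) ≤ -d),
                  mul_nonneg (mul_nonneg (by linarith : (0:ℝ) ≤ -c) ha₁) hl1]
              have s1 : (-c)*((a₀*X + a₁*Y) - 2) ≤ (-d)*σ := by
                linarith [h2, mul_le_mul_of_nonneg_left hsσ1 (by linarith : (0:ℝ) ≤ -d)]
              have s3 : a₁*σ ≤ A + 1 := by
                rw [hσdef]
                linarith [mul_nonneg ha₀ (by linarith : (0:ℝ) ≤ a₀*A + 1 - a₁*B), huA]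
              have s2 : (-d)*(A-1)*σ ≤ 2*(-c)*a₁*σ := by
                linarith [mul_le_mul_of_nonneg_right hdl (le_of_lt hσpos)]
              have s4 : (-c)*(((a₀*X + a₁*Y) - 2)*(A-1)) ≤ 2*(-c)*(A+1) := by
                linarith [mul_le_mul_of_nonneg_right s1 (by linarith : (0:ℝ) ≤ A - 1), s2,
                  mul_le_mul_of_nonneg_left s3 (by linarith : (0:ℝ) ≤ 2*(-c))]
              by_contra h8
              push_neg at h8
              have hgt : 2*(A+1) < ((a₀*X + a₁*Y) - 2)*(A-1) := by
                have := mul_lt_mul_of_pos_right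
                  (show (6:ℝ) < (a₀*X + a₁*Y) - 2 by linarith)
                  (show (0:ℝ) < A - 1 by linarith)
                linarith
              linarith [s4, mul_pos (by linarith : (0:ℝ) < -c)
                (by linarith : (0:ℝ) < ((a₀*X + a₁*Y) - 2)*(A-1) - 2*(A+1))]
          rcases le_or_gt (a₀*X + a₁*Y) 2 with hr | hr
          · obtain ⟨μ, m0, m1, mb⟩ := run_cover a₀ a₁ σ 1 1 X Y hu hσpos (Or.inl rfl)
              hsσ1 hsσ2 (by linarith) (by linarith)
            refine ⟨⟨1, by norm_num⟩, μ, m0, m1, ?_⟩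
            convert mb using 2 <;> simp [Matrix.cons_val]
          rcases le_or_gt (a₀*X + a₁*Y) 4 with hr4 | hr4
          · obtain ⟨μ, m0, m1, mb⟩ := run_cover a₀ a₁ σ 3 (-1) X Y hu hσpos (Or.inr rfl)
              hsσ1 hsσ2 (by linarith) (by linarith)
            refine ⟨⟨3, by norm_num⟩, μ, m0, m1, ?_⟩
            convert mb using 2 <;> simp [Matrix.cons_val]
          rcases le_or_gt (a₀*X + a₁*Y) 6 with hr6 | hr6
          · obtain ⟨μ, m0, m1, mb⟩ := run_cover a₀ a₁ σ 5 1 X Y hu hσpos (Or.inl rfl)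
              hsσ1 hsσ2 (by linarith) (by linarith)
            refine ⟨⟨5, by norm_num⟩, μ, m0, m1, ?_⟩
            convert mb using 2 <;> simp [Matrix.cons_val]
          · obtain ⟨μ, m0, m1, mb⟩ := run_cover a₀ a₁ σ 7 (-1) X Y hu hσpos (Or.inr rfl)
              hsσ1 hsσ2 (by linarith) (by linarith)
            refine ⟨⟨7, by norm_num⟩, μ, m0, m1, ?_⟩
            convert mb using 2 <;> simp [Matrix.cons_val]
      · -- 3b : H₂ misses the left strip: trim left by 1
        refine ⟨1, 0, 0, 0, 1, ![(0,0), (1/2, 0)], by norm_num, le_refl 0, le_refl 0, le_refl 0,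
          by linarith, by linarith, by norm_num, rfl, ?_, ?_, ?_⟩
        · show ((1:ℝ)/2, (0:ℝ)) = _
          norm_num
        · rw [Fin.sum_univ_one]
          refine le_trans (mydist_le (c := 1) (by norm_num) ?_) (by norm_num)
          show ((0:ℝ) - 1/2)^2 + ((0:ℝ) - 0)^2 ≤ 1^2
          norm_num
        · intro X Y hX1 hX2 hY1 hY2 h1 h2 hout
          exfalso
          apply hout
          refine ⟨?_, by linarith, by linarith, by linarith⟩
          by_contra hX'
          push_neg at hX'
          exact hLeft ⟨X, Y, ⟨hX1, hX2, hY1, hY2, h1, h2⟩, by linarith⟩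
    · -- 3a : H₂ misses the bottom strip: trim bottom by 1
      refine ⟨0, 0, 1, 0, 1, ![(0,0), (0, 1/2)], le_refl 0, le_refl 0, by norm_num, le_refl 0,
        by linarith, by linarith, by norm_num, rfl, ?_, ?_, ?_⟩
      · show ((0:ℝ), (1:ℝ)/2) = _
        norm_num
      · rw [Fin.sum_univ_one]
        refine le_trans (mydist_le (c := 1) (by norm_num) ?_) (by norm_num)
        show ((0:ℝ) - 0)^2 + ((0:ℝ) - 1/2)^2 ≤ 1^2
        norm_num
      · intro X Y hX1 hX2 hY1 hY2 h1 h2 hout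
        exfalso
        apply hout
        refine ⟨by linarith, by linarith, ?_, by linarith⟩
        by_contra hY'
        push_neg at hY'
        exact hBot ⟨X, Y, ⟨hX1, hX2, hY1, hY2, h1, h2⟩, by linarith⟩

/-- Key reduction lemma: in an axis-aligned rectangle `R` with all sides of length at
least 4 and center `p`, for every half-plane hint `H₁` at `p` there is a point `p' ∈ R`
at distance at most 2 from `p` such that, whatever half-plane hint `H₂` is received
at `p'`, there are a sub-rectangle `Rec ⊆ R` and a polygonal path from `p` to the center
of `Rec` that passes within distance 1 of every point of `(R ∩ H₁ ∩ H₂) \ Rec`, with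
`Perimeter(R) − Perimeter(Rec) ≥ 2` and the length of the path at most
`21·(Perimeter(R) − Perimeter(Rec))`. -/
theorem reduceRectangle (R : AARect)
    (h4x : 4 ≤ R.xmax - R.xmin) (h4y : 4 ≤ R.ymax - R.ymin)
    (H₁ : Set Pt) (hH₁ : IsHalfPlaneThrough H₁ R.center) :
    ∃ p' ∈ R.set, dist R.center p' ≤ 2 ∧
      ∀ H₂ : Set Pt, IsHalfPlaneThrough H₂ p' →
        ∃ Rec : AARect, Rec.set ⊆ R.set ∧
          ∃ (N : ℕ) (v : Fin (N + 1) → Pt),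
            v 0 = R.center ∧ v (Fin.last N) = Rec.center ∧
            (∀ q ∈ (R.set ∩ H₁ ∩ H₂) \ Rec.set, ∃ y ∈ polySet v, dist q y ≤ 1) ∧
            2 ≤ R.perim - Rec.perim ∧
            polyLength v ≤ 21 * (R.perim - Rec.perim) := by
  obtain ⟨u0, hu0ne, hH1eq⟩ := hH₁
  have hu0pos : 0 < ‖u0‖ := norm_pos_iff.mpr hu0ne
  obtain ⟨uh, huhdef⟩ : ∃ x : Pt, x = ‖u0‖⁻¹ • u0 := ⟨_, rfl⟩
  have huhnorm : ‖uh‖ = 1 := by rw [huhdef]; exact norm_smul_inv_norm hu0ne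
  have huhsq : (uh 0)^2 + (uh 1)^2 = 1 := pt_unit huhnorm
  have huh0b : -1 ≤ uh 0 ∧ uh 0 ≤ 1 := by
    constructor <;> nlinarith [sq_nonneg (uh 1)]
  have huh1b : -1 ≤ uh 1 ∧ uh 1 ≤ 1 := by
    constructor <;> nlinarith [sq_nonneg (uh 0)]
  obtain ⟨c₀, hc₀⟩ : ∃ x : ℝ, x = (R.xmin + R.xmax)/2 := ⟨_, rfl⟩
  obtain ⟨c₁, hc₁⟩ : ∃ x : ℝ, x = (R.ymin + R.ymax)/2 := ⟨_, rfl⟩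
  obtain ⟨A, hAdef⟩ : ∃ x : ℝ, x = (R.xmax - R.xmin)/2 := ⟨_, rfl⟩
  obtain ⟨B, hBdef⟩ : ∃ x : ℝ, x = (R.ymax - R.ymin)/2 := ⟨_, rfl⟩
  have hA : 2 ≤ A := by rw [hAdef]; linarith
  have hB : 2 ≤ B := by rw [hBdef]; linarith
  have hcen0 : R.center 0 = c₀ := by rw [hc₀]; rfl
  have hcen1 : R.center 1 = c₁ := by rw [hc₁]; rfl
  have hxmin : R.xmin = c₀ - A := by rw [hc₀, hAdef]; ring
  have hxmax : R.xmax = c₀ + A := by rw [hc₀, hAdef]; ring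
  have hymin : R.ymin = c₁ - B := by rw [hc₁, hBdef]; ring
  have hymax : R.ymax = c₁ + B := by rw [hc₁, hBdef]; ring
  have hH1' : ∀ q : Pt, q ∈ H₁ ↔ 0 ≤ uh 0 * (q 0 - c₀) + uh 1 * (q 1 - c₁) := by
    intro q
    rw [hH1eq]
    simp only [Set.mem_setOf_eq]
    have hinner : (inner ℝ u0 (q - R.center) : ℝ)
        = u0 0 * (q 0 - c₀) + u0 1 * (q 1 - c₁) := by
      rw [pt_inner]
      have h0 : (q - R.center) 0 = q 0 - c₀ := by
        show q 0 - R.center 0 = _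
        rw [hcen0]
      have h1 : (q - R.center) 1 = q 1 - c₁ := by
        show q 1 - R.center 1 = _
        rw [hcen1]
      rw [h0, h1]
    rw [hinner]
    have huh0 : uh 0 = ‖u0‖⁻¹ * u0 0 := by rw [huhdef]; rfl
    have huh1 : uh 1 = ‖u0‖⁻¹ * u0 1 := by rw [huhdef]; rfl
    rw [huh0, huh1]
    constructor
    · intro h
      have := mul_nonneg (le_of_lt (inv_pos.mpr hu0pos)) h
      nlinarith
    · intro h
      have := mul_nonneg (le_of_lt hu0pos) h
      have hinv : ‖u0‖ * (‖u0‖⁻¹ * u0 0 * (q 0 - c₀) + ‖u0‖⁻¹ * u0 1 * (q 1 - c₁))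
          = u0 0 * (q 0 - c₀) + u0 1 * (q 1 - c₁) := by
        field_simp
      linarith [hinv ▸ this]
  refine ⟨R.center + (2:ℝ) • uh, ?_, ?_, ?_⟩
  · constructor
    · show R.center 0 + 2 * uh 0 ∈ Set.Icc R.xmin R.xmax
      rw [hcen0, hxmin, hxmax]
      constructor <;> [linarith [huh0b.1]; linarith [huh0b.2]]
    · show R.center 1 + 2 * uh 1 ∈ Set.Icc R.ymin R.ymax
      rw [hcen1, hymin, hymax]
      constructor <;> [linarith [huh1b.1]; linarith [huh1b.2]]
  · rw [pt_dist]
    have e0 : R.center 0 - (R.center + (2:ℝ) • uh) 0 = -(2 * uh 0) := by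
      show R.center 0 - (R.center 0 + 2 * uh 0) = _
      ring
    have e1 : R.center 1 - (R.center + (2:ℝ) • uh) 1 = -(2 * uh 1) := by
      show R.center 1 - (R.center 1 + 2 * uh 1) = _
      ring
    rw [e0, e1]
    have : (-(2 * uh 0))^2 + (-(2 * uh 1))^2 = 4 := by linear_combination 4*huhsq
    rw [this, show (4:ℝ) = 2^2 by norm_num, Real.sqrt_sq (by norm_num : (0:ℝ) ≤ 2)]
  intro H₂ hH₂
  obtain ⟨w0, hw0ne, hH2eq⟩ := hH₂
  have hw0pos : 0 < ‖w0‖ := norm_pos_iff.mpr hw0ne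
  obtain ⟨wh, hwhdef⟩ : ∃ x : Pt, x = ‖w0‖⁻¹ • w0 := ⟨_, rfl⟩
  have hwhnorm : ‖wh‖ = 1 := by rw [hwhdef]; exact norm_smul_inv_norm hw0ne
  have hwhsq : (wh 0)^2 + (wh 1)^2 = 1 := pt_unit hwhnorm
  have hH2' : ∀ q : Pt, q ∈ H₂ ↔
      0 ≤ wh 0 * (q 0 - (c₀ + 2 * uh 0)) + wh 1 * (q 1 - (c₁ + 2 * uh 1)) := by
    intro q
    rw [hH2eq]
    simp only [Set.mem_setOf_eq]
    have hinner : (inner ℝ w0 (q - (R.center + (2:ℝ) • uh)) : ℝ)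
        = w0 0 * (q 0 - (c₀ + 2 * uh 0)) + w0 1 * (q 1 - (c₁ + 2 * uh 1)) := by
      rw [pt_inner]
      have h0 : (q - (R.center + (2:ℝ) • uh)) 0 = q 0 - (c₀ + 2 * uh 0) := by
        show q 0 - (R.center 0 + 2 * uh 0) = _
        rw [hcen0]
      have h1 : (q - (R.center + (2:ℝ) • uh)) 1 = q 1 - (c₁ + 2 * uh 1) := by
        show q 1 - (R.center 1 + 2 * uh 1) = _
        rw [hcen1]
      rw [h0, h1]
    rw [hinner]
    have hwh0 : wh 0 = ‖w0‖⁻¹ * w0 0 := by rw [hwhdef]; rfl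
    have hwh1 : wh 1 = ‖w0‖⁻¹ * w0 1 := by rw [hwhdef]; rfl
    rw [hwh0, hwh1]
    constructor
    · intro h
      have := mul_nonneg (le_of_lt (inv_pos.mpr hw0pos)) h
      nlinarith
    · intro h
      have := mul_nonneg (le_of_lt hw0pos) h
      have hinv : ‖w0‖ * (‖w0‖⁻¹ * w0 0 * (q 0 - (c₀ + 2 * uh 0))
            + ‖w0‖⁻¹ * w0 1 * (q 1 - (c₁ + 2 * uh 1)))
          = w0 0 * (q 0 - (c₀ + 2 * uh 0)) + w0 1 * (q 1 - (c₁ + 2 * uh 1)) := by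
        field_simp
      linarith [hinv ▸ this]
  obtain ⟨ε, hε, hεu⟩ : ∃ e : ℝ, (e = 1 ∨ e = -1) ∧ 0 ≤ e * uh 0 := by
    rcases le_or_gt 0 (uh 0) with h | h
    · exact ⟨1, Or.inl rfl, by linarith⟩
    · exact ⟨-1, Or.inr rfl, by linarith⟩
  obtain ⟨φ, hφ, hφu⟩ : ∃ e : ℝ, (e = 1 ∨ e = -1) ∧ 0 ≤ e * uh 1 := by
    rcases le_or_gt 0 (uh 1) with h | h
    · exact ⟨1, Or.inl rfl, by linarith⟩
    · exact ⟨-1, Or.inr rfl, by linarith⟩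
  have hε2 : ε^2 = 1 := by rcases hε with h | h <;> subst h <;> norm_num
  have hφ2 : φ^2 = 1 := by rcases hφ with h | h <;> subst h <;> norm_num
  have hua : (ε * uh 0)^2 + (φ * uh 1)^2 = 1 := by
    linear_combination (uh 0)^2 * hε2 + (uh 1)^2 * hφ2 + huhsq
  have hwa : (ε * wh 0)^2 + (φ * wh 1)^2 = 1 := by
    linear_combination (wh 0)^2 * hε2 + (wh 1)^2 * hφ2 + hwhsq
  obtain ⟨l, r, b, t, M, V, hl0, hr0, hb0, ht0, hlr, hbt, hsum1, hV0, hVlast, hlen, hcov⟩ :=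
    core A B (ε * uh 0) (φ * uh 1) (ε * wh 0) (φ * wh 1) hA hB hεu hφu hua hwa
  obtain ⟨Rec, hRx1, hRx2, hRy1, hRy2⟩ : ∃ Rc : AARect,
      Rc.xmin = c₀ + ε*(l-r)/2 - (2*A - (l+r))/2 ∧
      Rc.xmax = c₀ + ε*(l-r)/2 + (2*A - (l+r))/2 ∧
      Rc.ymin = c₁ + φ*(b-t)/2 - (2*B - (b+t))/2 ∧
      Rc.ymax = c₁ + φ*(b-t)/2 + (2*B - (b+t))/2 :=
    ⟨⟨_, _, _, _, by linarith, by linarith⟩, rfl, rfl, rfl, rfl⟩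
  have hRp : R.perim = 2*(2*A + 2*B) := by
    rw [AARect.perim, hxmin, hxmax, hymin, hymax]
    ring
  have hRecp : Rec.perim = 2*((2*A - (l+r)) + (2*B - (b+t))) := by
    rw [AARect.perim, hRx1, hRx2, hRy1, hRy2]
    ring
  refine ⟨Rec, ?_, ?_⟩
  · -- Rec.set ⊆ R.set
    rintro q ⟨hq0, hq1⟩
    rw [hRx1, hRx2, Set.mem_Icc] at hq0
    rw [hRy1, hRy2, Set.mem_Icc] at hq1
    refine ⟨?_, ?_⟩
    · rw [Set.mem_Icc, hxmin, hxmax]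
      rcases hε with he | he <;> subst he <;>
        exact ⟨by linarith [hq0.1, hq0.2], by linarith [hq0.1, hq0.2]⟩
    · rw [Set.mem_Icc, hymin, hymax]
      rcases hφ with he | he <;> subst he <;>
        exact ⟨by linarith [hq1.1, hq1.2], by linarith [hq1.1, hq1.2]⟩
  refine ⟨M, fun k => (!₂[c₀ + ε*(V k).1, c₁ + φ*(V k).2] : Pt), ?_, ?_, ?_, ?_, ?_⟩
  · -- v 0 = center
    ext j
    fin_cases j
    · show c₀ + ε*(V 0).1 = R.center 0
      rw [hV0, hcen0]
      norm_num
    · show c₁ + φ*(V 0).2 = R.center 1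
      rw [hV0, hcen1]
      norm_num
  · -- v last = Rec.center
    ext j
    fin_cases j
    · show c₀ + ε*(V (Fin.last M)).1 = Rec.center 0
      rw [hVlast]
      show _ = (Rec.xmin + Rec.xmax)/2
      rw [hRx1, hRx2]
      ring
    · show c₁ + φ*(V (Fin.last M)).2 = Rec.center 1
      rw [hVlast]
      show _ = (Rec.ymin + Rec.ymax)/2
      rw [hRy1, hRy2]
      ring
  · -- coverage
    rintro q ⟨⟨⟨hqR, hqH1⟩, hqH2⟩, hqN⟩
    obtain ⟨hqR0, hqR1⟩ := hqR
    rw [Set.mem_Icc, hxmin, hxmax] at hqR0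
    rw [Set.mem_Icc, hymin, hymax] at hqR1
    rw [hH1' q] at hqH1
    rw [hH2' q] at hqH2
    have hX1 : -A ≤ ε*(q 0 - c₀) := by
      rcases hε with he | he <;> subst he <;> linarith [hqR0.1, hqR0.2]
    have hX2 : ε*(q 0 - c₀) ≤ A := by
      rcases hε with he | he <;> subst he <;> linarith [hqR0.1, hqR0.2]
    have hY1 : -B ≤ φ*(q 1 - c₁) := by
      rcases hφ with he | he <;> subst he <;> linarith [hqR1.1, hqR1.2]
    have hY2 : φ*(q 1 - c₁) ≤ B := by
      rcases hφ with he | he <;> subst he <;> linarith [hqR1.1, hqR1.2]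
    have hh1 : 0 ≤ (ε*uh 0)*(ε*(q 0 - c₀)) + (φ*uh 1)*(φ*(q 1 - c₁)) := by
      have heq : (ε*uh 0)*(ε*(q 0 - c₀)) + (φ*uh 1)*(φ*(q 1 - c₁))
          = uh 0*(q 0 - c₀) + uh 1*(q 1 - c₁) := by
        linear_combination (uh 0*(q 0 - c₀))*hε2 + (uh 1*(q 1 - c₁))*hφ2
      rw [heq]
      exact hqH1
    have hh2 : 0 ≤ (ε*wh 0)*((ε*(q 0 - c₀)) - 2*(ε*uh 0))
        + (φ*wh 1)*((φ*(q 1 - c₁)) - 2*(φ*uh 1)) := by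
      have heq : (ε*wh 0)*((ε*(q 0 - c₀)) - 2*(ε*uh 0))
            + (φ*wh 1)*((φ*(q 1 - c₁)) - 2*(φ*uh 1))
          = wh 0*(q 0 - (c₀ + 2*uh 0)) + wh 1*(q 1 - (c₁ + 2*uh 1)) := by
        linear_combination (wh 0*(q 0 - c₀ - 2*uh 0))*hε2 + (wh 1*(q 1 - c₁ - 2*uh 1))*hφ2
      rw [heq]
      exact hqH2
    have hout : ¬(-A + l ≤ ε*(q 0 - c₀) ∧ ε*(q 0 - c₀) ≤ A - r ∧
        -B + b ≤ φ*(q 1 - c₁) ∧ φ*(q 1 - c₁) ≤ B - t) := by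
      rintro ⟨o1, o2, o3, o4⟩
      apply hqN
      refine ⟨?_, ?_⟩
      · rw [Set.mem_Icc, hRx1, hRx2]
        rcases hε with he | he <;> subst he <;> exact ⟨by linarith, by linarith⟩
      · rw [Set.mem_Icc, hRy1, hRy2]
        rcases hφ with he | he <;> subst he <;> exact ⟨by linarith, by linarith⟩
    obtain ⟨i, μ, hμ0, hμ1, hbnd⟩ :=
      hcov (ε*(q 0 - c₀)) (φ*(q 1 - c₁)) hX1 hX2 hY1 hY2 hh1 hh2 hout
    obtain ⟨L1, hL1⟩ : ∃ z : ℝ, z = (1-μ)*(V i.castSucc).1 + μ*(V i.succ).1 := ⟨_, rfl⟩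
    obtain ⟨L2, hL2⟩ : ∃ z : ℝ, z = (1-μ)*(V i.castSucc).2 + μ*(V i.succ).2 := ⟨_, rfl⟩
    rw [← hL1, ← hL2] at hbnd
    refine ⟨(1-μ) • (!₂[c₀ + ε*(V i.castSucc).1, c₁ + φ*(V i.castSucc).2] : Pt)
        + μ • (!₂[c₀ + ε*(V i.succ).1, c₁ + φ*(V i.succ).2] : Pt), ?_, ?_⟩
    · simp only [polySet, Set.mem_iUnion]
      exact ⟨i, (1-μ), μ, by linarith, hμ0, by ring, rfl⟩
    · rw [pt_dist]
      have hy0 : ((1-μ) • (!₂[c₀ + ε*(V i.castSucc).1, c₁ + φ*(V i.castSucc).2] : Pt)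
          + μ • (!₂[c₀ + ε*(V i.succ).1, c₁ + φ*(V i.succ).2] : Pt)) 0 = c₀ + ε*L1 := by
        rw [pt_add, pt_smul, pt_smul, pt_mk0, pt_mk0, hL1]
        ring
      have hy1 : ((1-μ) • (!₂[c₀ + ε*(V i.castSucc).1, c₁ + φ*(V i.castSucc).2] : Pt)
          + μ • (!₂[c₀ + ε*(V i.succ).1, c₁ + φ*(V i.succ).2] : Pt)) 1 = c₁ + φ*L2 := by
        rw [pt_add, pt_smul, pt_smul, pt_mk1, pt_mk1, hL2]
        ring
      rw [hy0, hy1]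
      have harg : (q 0 - (c₀ + ε*L1))^2 + (q 1 - (c₁ + φ*L2))^2
          = (L1 - ε*(q 0 - c₀))^2 + (L2 - φ*(q 1 - c₁))^2 := by
        linear_combination (L1^2 - (q 0 - c₀)^2)*hε2 + (L2^2 - (q 1 - c₁)^2)*hφ2
      rw [harg]
      calc Real.sqrt ((L1 - ε*(q 0 - c₀))^2 + (L2 - φ*(q 1 - c₁))^2)
          ≤ Real.sqrt 1 := Real.sqrt_le_sqrt hbnd
        _ = 1 := Real.sqrt_one
  · -- perimeter drop
    rw [hRp, hRecp]
    linarith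
  · -- length
    have hplen : polyLength (fun k => (!₂[c₀ + ε*(V k).1, c₁ + φ*(V k).2] : Pt))
        = ∑ i : Fin M, mydist (V i.castSucc) (V i.succ) := by
      simp only [polyLength]
      refine Finset.sum_congr rfl fun i _ => ?_
      rw [pt_dist, pt_mk0, pt_mk0, pt_mk1, pt_mk1, mydist]
      congr 1
      linear_combination (((V i.castSucc).1 - (V i.succ).1)^2)*hε2
        + (((V i.castSucc).2 - (V i.succ).2)^2)*hφ2
    rw [hplen, hRp, hRecp]
    calc ∑ i : Fin M, mydist (V i.castSucc) (V i.succ)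
        ≤ 21*(2*(l+r+b+t)) := hlen
      _ = 21 * (2*(2*A + 2*B) - 2*((2*A - (l+r)) + (2*B - (b+t)))) := by ring
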